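/- Let α_0, β_1, α_1, ..., β_k be a proposal-rejection alternating sequence in a Stable Roommates instance with strict preferences that stops at β_k (i.e., β_k is unmatched in M_{k−1}). Then M_k = M_{k−1} ∪ {{α_{k−1}, β_k}} is a stable matching of the whole instance H. -/
import Mathlib


/-- A housing market: each agent `a` has a strict partial order `pref a` on agents,
where `pref a b c` means `a` prefers the house of `c` to the house of `b` (i.e. `b ≺_a c`). -/
structure HousingMarket (N : Type) where
  pref : N → N → N → Prop
  irrefl : ∀ a b, ¬ pref a b b
  trans : ∀ a b c d, pref a b c → pref a c d → pref a b d

variable {N : Type} [Fintype N] [DecidableEq N]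

/-- `(a,b)` is an arc of the acceptability graph `G^H` (including all loops). -/
def accepts (H : HousingMarket N) (a b : N) : Prop := a = b ∨ H.pref a a b

/-- An allocation: a permutation of the agents all of whose arcs are acceptable. -/
def IsAllocation (H : HousingMarket N) (X : N → N) : Prop :=
  Function.Bijective X ∧ ∀ a, accepts H a (X a)

/-- A blocking cycle for `X`: a directed cycle of the acceptability graph (given as a
nonempty duplicate-free list, with successor `c.next`) on which every agent strictly
prefers the house of her successor to the house she gets in `X`. -/
def IsBlockingCycle (H : HousingMarket N) (X : N → N) (c : List N) : Prop :=
  c ≠ [] ∧ c.Nodup ∧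
    ∀ (a : N) (h : a ∈ c), accepts H a (c.next a h) ∧ H.pref a (X a) (c.next a h)

/-- `X` is in the core of `H`. -/
def InCore (H : HousingMarket N) (X : N → N) : Prop :=
  IsAllocation H X ∧ ∀ c : List N, ¬ IsBlockingCycle H X c

/-- A digraph (given by its arc relation `R`) has a directed cycle. -/
def HasCycle (R : N → N → Prop) : Prop :=
  ∃ c : List N, c ≠ [] ∧ c.Nodup ∧ ∀ (a : N) (h : a ∈ c), R a (c.next a h)

/-- Preferences of every agent are strict total orders on her acceptable set. -/
def StrictPrefs (H : HousingMarket N) : Prop :=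
  ∀ a b c, accepts H a b → accepts H a c → b ≠ c → H.pref a b c ∨ H.pref a c b

/-- `H'` is a `(p,q)`-improvement of `H`: only `q`'s preferences change, they agree
on `N \ {p}`, and the value of `p`'s house weakly rises for `q`. -/
def IsPQImprovement (H H' : HousingMarket N) (p q : N) : Prop :=
  (∀ a, a ≠ q → H.pref a = H'.pref a) ∧
  (∀ a b, a ≠ p → b ≠ p → (H.pref q a b ↔ H'.pref q a b)) ∧
  (∀ a, H.pref q a p → H'.pref q a p)

/-- `H'` is a `p`-improvement of `H`: a finite composition of `(p,q)`-improvements. -/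
def IsPImprovement (H H' : HousingMarket N) (p : N) : Prop :=
  Relation.ReflTransGen (fun K K' => ∃ q, IsPQImprovement K K' p q) H H'

/-- Mutual acceptability for Stable Roommates: `a ≺_a b` iff `b ≺_b a`. -/
def Mutual (H : HousingMarket N) : Prop := ∀ a b, H.pref a a b ↔ H.pref b b a

/-- A matching: an involution on agents, matched pairs being mutually acceptable
(`M a = a` means `a` is unmatched). -/
def IsMatching (H : HousingMarket N) (M : N → N) : Prop :=
  (∀ a, M (M a) = a) ∧ ∀ a, M a ≠ a → H.pref a a (M a)

/-- `{a,b}` is a blocking pair for `M`: each of them is unmatched or prefers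
the other to her partner (using the convention `M a = a` for unmatched agents). -/
def BlockingPair (H : HousingMarket N) (M : N → N) (a b : N) : Prop :=
  a ≠ b ∧ H.pref a (M a) b ∧ H.pref b (M b) a

/-- A stable matching. -/
def IsStableMatching (H : HousingMarket N) (M : N → N) : Prop :=
  IsMatching H M ∧ ∀ a b, ¬ BlockingPair H M a b

/-- One proposal–rejection step: if `m` is a matching with `αp` unmatched and no
blocking pair avoiding `αp`, `βi` is willing to accept `αp` and is `αp`'s most
preferred willing agent, then rematching `βi` with `αp` (leaving `βi`'s old partner
unmatched) again yields a matching whose only possible blocking pairs involve the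
newly unmatched agent `m βi`. -/
lemma step_lemma (H : HousingMarket N) (hmut : Mutual H) (m : N → N) (αp βi : N)
    (hm : IsMatching H m) (hαp : m αp = αp)
    (hs : ∀ a b, a ≠ αp → b ≠ αp → ¬ BlockingPair H m a b)
    (hw : H.pref βi (m βi) αp)
    (hmost : ∀ b, H.pref b (m b) αp → b ≠ βi → H.pref αp b βi) :
    IsMatching H (fun b => if b = βi then αp else if b = αp then βi
        else if b = m βi then m βi else m b) ∧
    ∀ a b, (a ≠ m βi ∨ m βi = βi) → (b ≠ m βi ∨ m βi = βi) →
      ¬ BlockingPair H (fun b => if b = βi then αp else if b = αp then βi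
        else if b = m βi then m βi else m b) a b := by
  obtain ⟨hinv, hacc⟩ := hm
  set m' : N → N := fun b => if b = βi then αp else if b = αp then βi
      else if b = m βi then m βi else m b with hm'def
  have hβα : βi ≠ αp := by
    intro h; subst h; rw [hαp] at hw; exact H.irrefl _ _ hw
  have hγinv : m (m βi) = βi := hinv βi
  have hγαp : m βi ≠ αp := by
    intro h
    have : m (m βi) = m αp := by rw [h]
    rw [hγinv, hαp] at this
    exact hβα this
  -- acceptability of the new pair
  have haccβ : H.pref βi βi αp := by
    by_cases h : m βi = βi
    · rwa [h] at hw
    · exact H.trans _ _ _ _ (hacc βi h) hw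
  have haccα : H.pref αp αp βi := (hmut βi αp).mp haccβ
  -- values of m'
  have hv1 : m' βi = αp := by simp [hm'def]
  have hv2 : m' αp = βi := by simp [hm'def, hβα.symm]
  have hv3 : ∀ b, b ≠ βi → b ≠ αp → b ≠ m βi → m' b = m b := by
    intro b h1 h2 h3; simp [hm'def, h1, h2, h3]
  have hv4 : m βi ≠ βi → m' (m βi) = m βi := by
    intro h; simp [hm'def, h, hγαp]
  -- m' is a matching
  have hmm : IsMatching H m' := by
    constructor
    · intro b
      by_cases h1 : b = βi
      · subst h1; rw [hv1, hv2]
      · by_cases h2 : b = αp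
        · subst h2; rw [hv2, hv1]
        · by_cases h3 : b = m βi
          · subst h3
            have hne : m βi ≠ βi := fun h => h1 h
            rw [hv4 hne, hv4 hne]
          · rw [hv3 b h1 h2 h3]
            have e1 : m b ≠ βi := by
              intro h; apply h3; rw [← h, hinv]
            have e2 : m b ≠ αp := by
              intro h
              apply h2
              have : m (m b) = m αp := by rw [h]
              rwa [hinv, hαp] at this
            have e3 : m b ≠ m βi := by
              intro h
              apply h1
              have : m (m b) = m (m βi) := by rw [h]
              rwa [hinv, hγinv] at this
            rw [hv3 _ e1 e2 e3, hinv]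
    · intro b hb
      by_cases h1 : b = βi
      · subst h1; rw [hv1]; exact haccβ
      · by_cases h2 : b = αp
        · subst h2; rw [hv2]; exact haccα
        · by_cases h3 : b = m βi
          · subst h3
            have hne : m βi ≠ βi := fun h => h1 h
            exact absurd (hv4 hne) hb
          · rw [hv3 b h1 h2 h3] at hb ⊢
            exact hacc b hb
  refine ⟨hmm, ?_⟩
  -- transfer of willingness from m' back to m
  have htrans : ∀ x y, x ≠ αp → (x ≠ m βi ∨ m βi = βi) → H.pref x (m' x) y →
      H.pref x (m x) y := by
    intro x y hx1 hx2 hp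
    by_cases hxβ : x = βi
    · subst hxβ; rw [hv1] at hp; exact H.trans _ _ _ _ hw hp
    · have hxγ : x ≠ m βi := by
        rcases hx2 with h | h
        · exact h
        · rw [h]; exact hxβ
      rwa [hv3 x hxβ hx1 hxγ] at hp
  intro a b ha hb hblk
  obtain ⟨hab, hpa, hpb⟩ := hblk
  by_cases haαp : a = αp
  · rw [haαp, hv2] at hpa
    rw [haαp] at hpb
    by_cases hbβ : b = βi
    · rw [hbβ] at hpa; exact H.irrefl _ _ hpa
    · have hbαp : b ≠ αp := fun h => hab (haαp.trans h.symm)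
      have hbw : H.pref b (m b) αp := htrans b αp hbαp hb hpb
      exact H.irrefl _ _ (H.trans _ _ _ _ hpa (hmost b hbw hbβ))
  · by_cases hbαp : b = αp
    · rw [hbαp, hv2] at hpb
      rw [hbαp] at hpa
      by_cases haβ : a = βi
      · rw [haβ] at hpb; exact H.irrefl _ _ hpb
      · have haw : H.pref a (m a) αp := htrans a αp haαp ha hpa
        exact H.irrefl _ _ (H.trans _ _ _ _ hpb (hmost a haw haβ))
    · exact hs a b haαp hbαp ⟨hab, htrans a b haαp ha hpa, htrans b a hbαp hb hpb⟩

/-- if a proposal-rejection alternating sequence stops at `β k` (an agent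
unmatched in `M (k-1)`), then matching `α (k-1)` with `β k` yields a stable matching of
the whole instance `H`. -/
theorem stmt14 (H : HousingMarket N)
    (hmut : Mutual H) (hstrict : StrictPrefs H)
    (k : ℕ) (α β : ℕ → N) (M : ℕ → N → N)
    (h0m : IsMatching H (M 0)) (h0u : M 0 (α 0) = α 0)
    (h0s : ∀ a b, a ≠ α 0 → b ≠ α 0 → ¬ BlockingPair H (M 0) a b)
    (hstep : ∀ i, 1 ≤ i → i ≤ k - 1 →
      -- (i) `β i` is willing to accept `α (i-1)` ...
      H.pref (β i) (M (i-1) (β i)) (α (i-1)) ∧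
      -- ... and is the agent most preferred by `α (i-1)` among the willing agents;
      (∀ b, H.pref b (M (i-1) b) (α (i-1)) → b ≠ β i → H.pref (α (i-1)) b (β i)) ∧
      -- (ii) `β i` is matched in `M (i-1)` and `α i` is its partner;
      M (i-1) (β i) ≠ β i ∧ α i = M (i-1) (β i) ∧
      -- (iii) `M i` is obtained from `M (i-1)` by matching `α (i-1)` with `β i`,
      -- leaving `α i` unmatched.
      (∀ b, M i b = if b = α i then α i else if b = β i then α (i-1)
            else if b = α (i-1) then β i else M (i-1) b))
    (hk : 1 ≤ k)
    -- the sequence stops at `β k`: `β k` is unmatched in `M (k-1)`, is willing to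
    -- accept `α (k-1)`, and is the most preferred willing agent for `α (k-1)`
    (hstop₁ : M (k-1) (β k) = β k)
    (hstop₂ : H.pref (β k) (M (k-1) (β k)) (α (k-1)))
    (hstop₃ : ∀ b, H.pref b (M (k-1) b) (α (k-1)) → b ≠ β k →
      H.pref (α (k-1)) b (β k)) :
    IsStableMatching H (fun b =>
      if b = β k then α (k-1) else if b = α (k-1) then β k else M (k-1) b) := by
  -- the invariant: each `M i` is a matching, `α i` is unmatched,
  -- and all blocking pairs involve `α i`
  have inv : ∀ i, i ≤ k - 1 → IsMatching H (M i) ∧ M i (α i) = α i ∧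
      ∀ a b, a ≠ α i → b ≠ α i → ¬ BlockingPair H (M i) a b := by
    intro i
    induction i with
    | zero => exact fun _ => ⟨h0m, h0u, h0s⟩
    | succ i ih =>
      intro hik
      obtain ⟨hm, hαu, hs⟩ := ih (by omega)
      obtain ⟨hw, hmost, hmatched, hαdef, hMdef⟩ := hstep (i+1) (by omega) hik
      simp only [Nat.add_sub_cancel] at hw hmost hmatched hαdef hMdef
      have key := step_lemma H hmut (M i) (α i) (β (i+1)) hm hαu hs hw hmost
      have hγα : M i (β (i+1)) ≠ α i := by
        intro h
        have h2 : β (i+1) = α i := by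
          have h3 := congrArg (M i) h
          rwa [hm.1, hαu] at h3
        rw [h2, hαu] at hw
        exact H.irrefl _ _ hw
      have hMeq : M (i+1) = fun b => if b = β (i+1) then α i else if b = α i then β (i+1)
          else if b = M i (β (i+1)) then M i (β (i+1)) else M i b := by
        funext b
        rw [hMdef b, hαdef]
        by_cases h1 : b = β (i+1)
        · simp [h1, Ne.symm hmatched]
        · by_cases h2 : b = α i
          · simp [h1, h2, Ne.symm hγα]
          · by_cases h3 : b = M i (β (i+1)) <;> simp [h1, h2, h3, hmatched, hγα]
      refine ⟨?_, ?_, ?_⟩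
      · rw [hMeq]; exact key.1
      · rw [hMeq, hαdef]
        simp [hmatched, hγα]
      · intro a b ha hb
        rw [hαdef] at ha hb
        rw [hMeq]
        exact key.2 a b (Or.inl ha) (Or.inl hb)
  obtain ⟨hm, hαu, hs⟩ := inv (k-1) le_rfl
  have key := step_lemma H hmut (M (k-1)) (α (k-1)) (β k) hm hαu hs hstop₂ hstop₃
  have hMeq : (fun b => if b = β k then α (k-1) else if b = α (k-1) then β k
      else M (k-1) b) = fun b => if b = β k then α (k-1) else if b = α (k-1) then β k
      else if b = M (k-1) (β k) then M (k-1) (β k) else M (k-1) b := by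
    funext b
    rw [hstop₁]
    by_cases h1 : b = β k
    · simp [h1]
    · by_cases h2 : b = α (k-1) <;> simp [h1, h2]
  rw [hMeq]
  exact ⟨key.1, fun a b => key.2 a b (Or.inr hstop₁) (Or.inr hstop₁)⟩
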